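/- With H as in the previous statement (4×4 matrix with parameters a,b,V, V>0): as (a,b) ranges over [−2,2]², the set of eigenvalues of H equals [−sqrt(V²+16), −V] ∪ [V, sqrt(V²+16)], and the eigenvalue V is attained exactly when a = b or a = −b. -/

import Mathlib

lemma detfact (V a b lam : ℝ) :
    Matrix.det (!![V, a, 0, b; a, -V, b, 0; 0, b, V, a; b, 0, a, -V]
      - lam • (1 : Matrix (Fin 4) (Fin 4) ℝ))
    = (lam ^ 2 - V ^ 2 - (a + b) ^ 2) * (lam ^ 2 - V ^ 2 - (a - b) ^ 2) := by
  simp [Matrix.det_succ_row_zero, Fin.sum_univ_succ, Fin.succAbove, Fin.castSucc, Fin.castAdd,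
    Fin.castLE, Fin.succ, Matrix.sub_apply, Matrix.smul_apply, Matrix.one_apply]
  ring

theorem stmt12 (V : ℝ) (hV : 0 < V) :
    {lam : ℝ | ∃ a b : ℝ, a ∈ Set.Icc (-2 : ℝ) 2 ∧ b ∈ Set.Icc (-2 : ℝ) 2 ∧
        Matrix.det
          (!![V, a, 0, b; a, -V, b, 0; 0, b, V, a; b, 0, a, -V]
            - lam • (1 : Matrix (Fin 4) (Fin 4) ℝ)) = 0}
      = Set.Icc (-Real.sqrt (V ^ 2 + 16)) (-V) ∪ Set.Icc V (Real.sqrt (V ^ 2 + 16)) ∧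
    ∀ a b : ℝ, a ∈ Set.Icc (-2 : ℝ) 2 → b ∈ Set.Icc (-2 : ℝ) 2 →
      (Matrix.det
          (!![V, a, 0, b; a, -V, b, 0; 0, b, V, a; b, 0, a, -V]
            - V • (1 : Matrix (Fin 4) (Fin 4) ℝ)) = 0 ↔ a = b ∨ a = -b) := by
  have hM0 : (0:ℝ) ≤ V ^ 2 + 16 := by positivity
  set M := Real.sqrt (V ^ 2 + 16) with hMdef
  have hM2 : M ^ 2 = V ^ 2 + 16 := Real.sq_sqrt hM0
  have hMnn : 0 ≤ M := Real.sqrt_nonneg _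
  constructor
  · ext lam
    simp only [Set.mem_setOf_eq, Set.mem_union, Set.mem_Icc, detfact]
    constructor
    · rintro ⟨a, b, ⟨ha1, ha2⟩, ⟨hb1, hb2⟩, hd⟩
      have hcases : lam ^ 2 - V ^ 2 = (a + b) ^ 2 ∨ lam ^ 2 - V ^ 2 = (a - b) ^ 2 := by
        rcases mul_eq_zero.1 hd with h | h
        · left; linarith
        · right; linarith
      have hlo : V ^ 2 ≤ lam ^ 2 := by rcases hcases with h | h <;> nlinarith
      have hhi : lam ^ 2 ≤ M ^ 2 := by rw [hM2]; rcases hcases with h | h <;> nlinarith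
      rcases le_or_gt lam 0 with h0 | h0
      · left; constructor <;> nlinarith
      · right; constructor <;> nlinarith
    · intro h
      have hlo : V ^ 2 ≤ lam ^ 2 := by rcases h with ⟨h1, h2⟩ | ⟨h1, h2⟩ <;> nlinarith
      have hhi : lam ^ 2 ≤ V ^ 2 + 16 := by
        rw [← hM2]; rcases h with ⟨h1, h2⟩ | ⟨h1, h2⟩ <;> nlinarith
      set s := lam ^ 2 - V ^ 2 with hs
      have hs0 : 0 ≤ s := by linarith
      have hs16 : s ≤ 16 := by linarith
      have hle2 : Real.sqrt s / 2 ≤ 2 := by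
        nlinarith [Real.sqrt_le_sqrt hs16, Real.sqrt_nonneg s,
          Real.sq_sqrt (by norm_num : (0:ℝ) ≤ 16), Real.sqrt_nonneg (16:ℝ)]
      have hge : (-2:ℝ) ≤ Real.sqrt s / 2 := by nlinarith [Real.sqrt_nonneg s]
      refine ⟨Real.sqrt s / 2, Real.sqrt s / 2, ⟨hge, hle2⟩, ⟨hge, hle2⟩, ?_⟩
      · have : (Real.sqrt s / 2 + Real.sqrt s / 2) ^ 2 = s := by
          have := Real.sq_sqrt hs0; nlinarith
        rw [show Real.sqrt s / 2 + Real.sqrt s / 2 = Real.sqrt s by ring] at this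
        have h1 : lam ^ 2 - V ^ 2 - (Real.sqrt s / 2 + Real.sqrt s / 2) ^ 2 = 0 := by
          rw [show Real.sqrt s / 2 + Real.sqrt s / 2 = Real.sqrt s by ring, this]; linarith
        rw [h1, zero_mul]
  · intro a b _ _
    rw [detfact]
    constructor
    · intro hd
      rcases mul_eq_zero.1 hd with h | h
      · right; nlinarith
      · left; nlinarith
    · rintro (rfl | rfl)
      · ring
      · ring
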